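/- If x ∈ D, then the Takagi function T is not approximately derivable at x (there is no real number L that is an approximate derivative of T at x). -/

import Mathlib

open MeasureTheory Filter Set

noncomputable section

/-- The set of dyadic numbers of level `n`: `{k / 2^n : k ∈ ℤ}`. -/
def Dset (n : ℕ) : Set ℝ := {y : ℝ | ∃ k : ℤ, y = (k : ℝ) / 2 ^ n}

/-- The set of all dyadic numbers. -/
def Ddyadic : Set ℝ := ⋃ n, Dset n

/-- `g k x = dist(x, D_k)`. -/
def g (k : ℕ) (x : ℝ) : ℝ := Metric.infDist x (Dset k)

/-- The Takagi function `T x = ∑_{k=1}^∞ g_k(x)`. -/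
def T (x : ℝ) : ℝ := ∑' k : ℕ, g (k + 1) x

/-- `G' n x = g_1'(x) + ⋯ + g_n'(x)` (so `G' 0 x = 0`). -/
def G' (n : ℕ) (x : ℝ) : ℝ := ∑ k ∈ Finset.range n, deriv (g (k + 1)) x

/-- `f` is approximately derivable at `x` with approximate derivative `L`:
for every `ε > 0`, the relative measure of the set of points `y` in `(x - r, x + r)`,
`y ≠ x`, where `|(f y - f x - L (y - x)) / (y - x)| ≥ ε`, divided by `2r`,
tends to `0` as `r → 0⁺`. -/
def ApproxDerivAt (f : ℝ → ℝ) (x L : ℝ) : Prop :=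
  ∀ ε > (0 : ℝ), Tendsto
    (fun r : ℝ => volume (Ioo (x - r) (x + r) ∩
        {y : ℝ | y ≠ x ∧ ε ≤ |(f y - f x - L * (y - x)) / (y - x)|}) /
      ENNReal.ofReal (2 * r))
    (nhdsWithin 0 (Ioi 0)) (nhds 0)

lemma Dset_nonempty (n : ℕ) : (Dset n).Nonempty := ⟨0, 0, by simp⟩

lemma Dset_mono {n j : ℕ} (h : n ≤ j) : Dset n ⊆ Dset j := by
  rintro y ⟨k, rfl⟩
  refine ⟨k * 2 ^ (j - n), ?_⟩
  have h2 : (2:ℝ) ^ j = 2 ^ (j - n) * 2 ^ n := by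
    rw [← pow_add]; congr 1; omega
  push_cast
  rw [h2]
  field_simp

lemma g_nonneg (k : ℕ) (y : ℝ) : 0 ≤ g k y := Metric.infDist_nonneg

lemma g_le (k : ℕ) (y : ℝ) : g k y ≤ (1/2) ^ k := by
  have hmem : ((⌊y * 2 ^ k⌋ : ℝ) / 2 ^ k) ∈ Dset k := ⟨⌊y * 2 ^ k⌋, rfl⟩
  have h2 : (0:ℝ) < 2 ^ k := by positivity
  calc g k y ≤ dist y ((⌊y * 2 ^ k⌋ : ℝ) / 2 ^ k) := Metric.infDist_le_dist_of_mem hmem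
    _ ≤ (1/2) ^ k := by
        have hf := Int.floor_le (y * 2 ^ k)
        have hc := Int.lt_floor_add_one (y * 2 ^ k)
        have hmul : ((1:ℝ)/2) ^ k * 2 ^ k = 1 := by
          rw [← mul_pow]; norm_num
        have key : y - (⌊y * 2 ^ k⌋ : ℝ) / 2 ^ k = (y * 2 ^ k - ⌊y * 2 ^ k⌋) / 2 ^ k := by
          field_simp
        rw [Real.dist_eq, key, abs_le]
        constructor
        · rw [le_div_iff₀ h2]; nlinarith
        · rw [div_le_iff₀ h2]; nlinarith

lemma summable_g (y : ℝ) : Summable (fun k : ℕ => g (k + 1) y) := by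
  apply Summable.of_nonneg_of_le (fun k => g_nonneg _ _) (fun k => g_le (k+1) y)
  exact (summable_geometric_of_lt_one (by norm_num) (by norm_num)).comp_injective
    (add_left_injective 1)

lemma g_lip (k : ℕ) (x y : ℝ) : |g k y - g k x| ≤ |y - x| := by
  rw [abs_sub_le_iff]
  constructor
  · have := Metric.infDist_le_infDist_add_dist (x := y) (y := x) (s := Dset k)
    rw [Real.dist_eq] at this
    unfold g; linarith [abs_sub_comm y x ▸ this]
  · have := Metric.infDist_le_infDist_add_dist (x := x) (y := y) (s := Dset k)
    rw [Real.dist_eq, abs_sub_comm x y] at this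
    unfold g; linarith

lemma g_eq_zero {n k : ℕ} (h : n ≤ k) {x : ℝ} (hx : x ∈ Dset n) : g k x = 0 :=
  Metric.infDist_zero_of_mem (Dset_mono h hx)

lemma g_lower {n j : ℕ} (hj : n ≤ j) {x y : ℝ} (hx : x ∈ Dset n)
    (h : |y - x| ≤ (1/2) ^ (j + 1)) : |y - x| ≤ g j y := by
  obtain ⟨q, hq⟩ := Dset_mono hj hx
  have : Nonempty (Dset j) := (Dset_nonempty j).to_subtype
  rw [g, Metric.infDist_eq_iInf]
  refine le_ciInf fun ⟨d, p, hp⟩ => ?_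
  simp only [Real.dist_eq]
  rcases eq_or_ne p q with rfl | hpq
  · rw [hp, ← hq]
  · have h2 : (0:ℝ) < 2 ^ j := by positivity
    have hsep : (1:ℝ)/2^j ≤ |d - x| := by
      rw [hp, hq, div_sub_div_same, abs_div, abs_of_pos h2]
      have h1 : (1:ℝ) ≤ |(p:ℝ) - q| := by
        have : (1:ℤ) ≤ |p - q| := Int.one_le_abs (sub_ne_zero.mpr hpq)
        calc (1:ℝ) ≤ ((|p - q| : ℤ) : ℝ) := by exact_mod_cast this
          _ = |(p:ℝ) - q| := by push_cast; rfl
      gcongr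
    have h3 : (1/2:ℝ)^(j+1) = (1/2) * (1/2^j) := by
      rw [pow_succ']; congr 1; simp [one_div, inv_pow]
    have h4 : |y - d| ≥ |d - x| - |y - x| := by
      have := abs_sub_abs_le_abs_sub (d - x) (d - y)
      have h5 : |d - y| = |y - d| := abs_sub_comm _ _
      have h6 : |(d - x) - (d - y)| = |y - x| := by rw [show (d-x)-(d-y) = y - x by ring]
      linarith [abs_sub_abs_le_abs_sub (d - x) (d - y), le_abs_self ((d-x)-(d-y))]
    nlinarith [abs_nonneg (y - x)]

lemma key_bound {n : ℕ} {x : ℝ} (hx : x ∈ Dset n) (L : ℝ) :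
    ∃ δ > (0:ℝ), ∀ y : ℝ, y ≠ x → |y - x| ≤ δ →
      1 ≤ |(T y - T x - L * (y - x)) / (y - x)| := by
  set A : ℕ := ⌈|L|⌉₊ + 1 with hA
  set m : ℕ := 2 * n + A with hm
  refine ⟨(1/2)^(m+1), by positivity, fun y hy hyd => ?_⟩
  have hyx : y - x ≠ 0 := sub_ne_zero.mpr hy
  set h : ℝ := |y - x| with hh
  have hh0 : 0 < h := abs_pos.mpr hyx
  have hTx : T x = ∑ k ∈ Finset.range n, g (k+1) x := by
    apply tsum_eq_sum
    intro k hk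
    simp only [Finset.mem_range, not_lt] at hk
    exact g_eq_zero (by omega) hx
  have hTy : ∑ k ∈ Finset.range m, g (k+1) y ≤ T y :=
    Summable.sum_le_tsum _ (fun k _ => g_nonneg _ _) (summable_g y)
  have hnm : n ≤ m := by omega
  have hsplit : ∑ k ∈ Finset.range m, g (k+1) y
      = ∑ k ∈ Finset.range n, g (k+1) y + ∑ k ∈ Finset.Ico n m, g (k+1) y := by
    rw [Finset.range_eq_Ico, Finset.range_eq_Ico]
    exact (Finset.sum_Ico_consecutive _ (Nat.zero_le n) hnm).symm
  have h1 : ∀ k ∈ Finset.range n, g (k+1) x - h ≤ g (k+1) y := by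
    intro k _
    have := (abs_le.mp (g_lip (k+1) x y)).1
    linarith
  have h2 : ∀ k ∈ Finset.Ico n m, h ≤ g (k+1) y := by
    intro k hk
    simp only [Finset.mem_Ico] at hk
    apply g_lower (show n ≤ k + 1 by omega) hx
    calc |y - x| ≤ (1/2)^(m+1) := hyd
      _ ≤ (1/2)^(k+1+1) := by
          apply pow_le_pow_of_le_one (by norm_num) (by norm_num); omega
  have hlow : (A:ℝ) * h ≤ T y - T x := by
    have s1 : ∑ k ∈ Finset.range n, (g (k+1) x - h) ≤ ∑ k ∈ Finset.range n, g (k+1) y :=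
      Finset.sum_le_sum h1
    have s2 : ∑ k ∈ Finset.Ico n m, h ≤ ∑ k ∈ Finset.Ico n m, g (k+1) y :=
      Finset.sum_le_sum h2
    rw [Finset.sum_sub_distrib, Finset.sum_const, Finset.card_range, ← hTx] at s1
    rw [Finset.sum_const, Nat.card_Ico] at s2
    have hcard : ((m - n : ℕ) : ℝ) = (n : ℝ) + A := by
      have : m - n = n + A := by omega
      rw [this]; push_cast; ring
    rw [nsmul_eq_mul] at s1 s2
    rw [hcard] at s2
    have := hsplit ▸ hTy
    nlinarith
  have hAge : |L| + 1 ≤ (A:ℝ) := by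
    have := Nat.le_ceil |L|
    have h2 : (⌈|L|⌉₊ : ℝ) + 1 = (A : ℝ) := by rw [hA]; push_cast; ring
    linarith
  have hquot : (T y - T x - L * (y - x)) / (y - x) = (T y - T x) / (y - x) - L := by
    field_simp
  have habs : |(T y - T x) / (y - x)| = (T y - T x) / h := by
    rw [abs_div, ← hh, abs_of_nonneg]
    nlinarith
  have hdiv : (A:ℝ) ≤ (T y - T x) / h := by
    rw [le_div_iff₀ hh0]; linarith
  calc (1:ℝ) ≤ (A:ℝ) - |L| := by linarith
    _ ≤ |(T y - T x) / (y - x)| - |L| := by rw [habs]; linarith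
    _ ≤ |(T y - T x) / (y - x) - L| := abs_sub_abs_le_abs_sub _ _
    _ = |(T y - T x - L * (y - x)) / (y - x)| := by rw [hquot]

theorem takagi_not_approx_deriv_dyadic (x : ℝ) (hx : x ∈ Ddyadic) :
    ¬ ∃ L : ℝ, ApproxDerivAt T x L := by
  rintro ⟨L, hL⟩
  obtain ⟨n, hxn⟩ : ∃ n, x ∈ Dset n := by simpa [Ddyadic] using hx
  obtain ⟨δ, hδ, key⟩ := key_bound hxn L
  have h1 := hL 1 one_pos
  have hev : ∀ᶠ r in nhdsWithin (0:ℝ) (Ioi 0),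
      (volume (Ioo (x - r) (x + r) ∩
        {y : ℝ | y ≠ x ∧ 1 ≤ |(T y - T x - L * (y - x)) / (y - x)|}) /
      ENNReal.ofReal (2 * r)) = 1 := by
    filter_upwards [Ioo_mem_nhdsGT hδ] with r hr
    obtain ⟨hr0, hrδ⟩ := hr
    have hset : Ioo (x - r) (x + r) ∩
        {y : ℝ | y ≠ x ∧ 1 ≤ |(T y - T x - L * (y - x)) / (y - x)|}
        = Ioo (x - r) (x + r) \ {x} := by
      ext y
      simp only [mem_inter_iff, mem_Ioo, mem_setOf_eq, mem_diff, mem_singleton_iff]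
      constructor
      · rintro ⟨hio, hne, _⟩; exact ⟨hio, hne⟩
      · rintro ⟨⟨hl, hu⟩, hne⟩
        refine ⟨⟨hl, hu⟩, hne, key y hne ?_⟩
        rw [abs_le]
        constructor <;> linarith
    rw [hset, measure_diff_null (Real.volume_singleton), Real.volume_Ioo,
      show x + r - (x - r) = 2 * r by ring]
    exact ENNReal.div_self (ne_of_gt (ENNReal.ofReal_pos.mpr (by linarith)))
      ENNReal.ofReal_ne_top
  have h2 : Tendsto (fun _ : ℝ => (1 : ENNReal)) (nhdsWithin (0:ℝ) (Ioi 0)) (nhds 0) :=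
    h1.congr' hev
  have := tendsto_nhds_unique h2 tendsto_const_nhds
  exact one_ne_zero this.symm
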